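/- Let n ≥ 1 and let T : ℝⁿ → ℝⁿ be monotone, additively homogeneous, and convex. Consider the directed graph G on vertex set {1,…,n} with an edge from i to j if and only if j ∈ supp(T_i), and for C ⊆ {1,…,n} let hreach(C) be the smallest set R ⊆ {1,…,n} containing C and satisfying: whenever J ⊆ R is nonempty, i ∉ J, and the set {T_i(−t·e_J) : t ≥ 0} is unbounded below, then i ∈ R. Then all additive slice spaces A_α^β(T) = {x : α·e + x ≤ T(x) ≤ β·e + x}, α ≤ β, are bounded in Hilbert's seminorm if and only if G has exactly one final class C and hreach(C) = {1,…,n}. -/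

import Mathlib

/-- `T` is additively homogeneous: `T(x + c·e) = T(x) + c·e`. -/
def AddHomog (n : ℕ) (T : (Fin n → ℝ) → (Fin n → ℝ)) : Prop :=
  ∀ (x : Fin n → ℝ) (c : ℝ), T (fun i => x i + c) = fun i => T x i + c

/-- The support of `g : ℝⁿ → ℝ`: indices `i` on which `g` effectively depends. -/
def Supp (n : ℕ) (g : (Fin n → ℝ) → ℝ) : Set (Fin n) :=
  {i | ∃ x y : Fin n → ℝ, (∀ j, j ≠ i → x j = y j) ∧ g x ≠ g y}

/-- Hilbert's seminorm. -/
noncomputable def hilbertSeminorm (n : ℕ) (x : Fin n → ℝ) : ℝ :=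
  (⨆ i, x i) - ⨅ i, x i

/-- The additive slice space `A_α^β(T)`. -/
def addSliceSpace (n : ℕ) (T : (Fin n → ℝ) → (Fin n → ℝ)) (α β : ℝ) : Set (Fin n → ℝ) :=
  {x | ∀ i, α + x i ≤ T x i ∧ T x i ≤ β + x i}

/-- Edge relation of the digraph `G`: there is an edge from `i` to `j`
iff `j ∈ supp(T_i)`. -/
def GEdge (n : ℕ) (T : (Fin n → ℝ) → (Fin n → ℝ)) (i j : Fin n) : Prop :=
  j ∈ Supp n (fun x => T x i)

/-- `C` is a final class of the digraph: it is nonempty, every edge starting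
in `C` ends in `C`, and any two vertices of `C` are joined by a directed path. -/
def FinalClass (n : ℕ) (T : (Fin n → ℝ) → (Fin n → ℝ)) (C : Set (Fin n)) : Prop :=
  C.Nonempty ∧ (∀ i ∈ C, ∀ j, GEdge n T i j → j ∈ C) ∧
    (∀ i ∈ C, ∀ j ∈ C, Relation.ReflTransGen (GEdge n T) i j)

/-- `R` is closed for hypergraph reachability: whenever `J ⊆ R` is nonempty,
`i ∉ J`, and `{T_i(−t·e_J) : t ≥ 0}` is unbounded below, then `i ∈ R`. -/
def HClosed (n : ℕ) (T : (Fin n → ℝ) → (Fin n → ℝ)) (R : Set (Fin n)) : Prop :=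
  ∀ (J : Set (Fin n)) (i : Fin n), J.Nonempty → J ⊆ R → i ∉ J →
    (∀ c : ℝ, ∃ t : ℝ, 0 ≤ t ∧ T (J.indicator fun _ => -t) i < c) → i ∈ R

/-- `hreach(C)`: the smallest set containing `C` that is closed for
hypergraph reachability. -/
def HReach (n : ℕ) (T : (Fin n → ℝ) → (Fin n → ℝ)) (C : Set (Fin n)) : Set (Fin n) :=
  ⋂₀ {R | C ⊆ R ∧ HClosed n T R}

-- ————————————————————————————————————————————————————————————————————————
-- Auxiliary definitions
-- ————————————————————————————————————————————————————————————————————————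

/-- `s` in coordinate `j`, zero elsewhere. -/
def sing {n : ℕ} (j : Fin n) (s : ℝ) : Fin n → ℝ := fun k => if k = j then s else 0

def Grows (γ : ℝ → ℝ) : Prop := ∀ c : ℝ, ∃ s₀ : ℝ, ∀ s : ℝ, s₀ ≤ s → c ≤ γ s

def Reach (n : ℕ) (T : (Fin n → ℝ) → (Fin n → ℝ)) (v : Fin n) : Set (Fin n) :=
  {w | Relation.ReflTransGen (GEdge n T) v w}

/-- hypergraph reachability stages -/
def HStage (n : ℕ) (T : (Fin n → ℝ) → (Fin n → ℝ)) (C : Set (Fin n)) : ℕ → Set (Fin n)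
  | 0 => C
  | (k+1) => HStage n T C k ∪ {i | ∃ J : Set (Fin n), J.Nonempty ∧ J ⊆ HStage n T C k ∧
      i ∉ J ∧ (∀ c : ℝ, ∃ t : ℝ, 0 ≤ t ∧ T (J.indicator fun _ => -t) i < c)}

/-- value-iteration sequence for the obstacle problem -/
noncomputable def Wseq (n : ℕ) (T : (Fin n → ℝ) → (Fin n → ℝ))
    (K : Set (Fin n)) (t β : ℝ) : ℕ → (Fin n → ℝ)
  | 0 => K.indicator fun _ => t
  | (m+1) => fun i => max (K.indicator (fun _ => t) i) (T (Wseq n T K t β m) i - β)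

section Aux
variable {n : ℕ} {T : (Fin n → ℝ) → (Fin n → ℝ)}

/-- coordinate change off the support does not change value -/
lemma supp_indep {g : (Fin n → ℝ) → ℝ} {x y : Fin n → ℝ}
    (h : ∀ j ∈ Supp n g, x j = y j) : g x = g y := by
  classical
  have key : ∀ (s : Finset (Fin n)) (x : Fin n → ℝ), (∀ j, j ∉ s → x j = y j) →
      (∀ j ∈ s, j ∉ Supp n g) → g x = g y := by
    intro s
    induction s using Finset.induction_on with
    | empty =>
      intro x hx _
      have : x = y := funext fun j => hx j (Finset.notMem_empty j)
      rw [this]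
    | @insert a s ha ih =>
      intro x hx hs
      have haS : a ∉ Supp n g := hs a (Finset.mem_insert_self a s)
      have hstep : g x = g (Function.update x a (y a)) := by
        by_contra hne
        exact haS ⟨x, Function.update x a (y a),
          fun j hj => (Function.update_of_ne hj _ x).symm, hne⟩
      rw [hstep]
      apply ih
      · intro j hj
        by_cases hja : j = a
        · subst hja; simp
        · rw [Function.update_of_ne hja]
          exact hx j (by simp [hja, hj])
      · intro j hj; exact hs j (Finset.mem_insert_of_mem hj)
  apply key (Finset.univ.filter (fun j => j ∉ Supp n g)) x
  · intro j hj
    simp only [Finset.mem_filter, Finset.mem_univ, true_and, not_not] at hj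
    exact h j hj
  · intro j hj
    simpa using (Finset.mem_filter.mp hj).2

lemma nonexp (hmono : Monotone T) (hhom : AddHomog n T) {x y : Fin n → ℝ} {c : ℝ}
    (h : ∀ j, x j ≤ y j + c) (i : Fin n) : T x i ≤ T y i + c := by
  have h1 : T x ≤ T (fun j => y j + c) := hmono h
  have h2 := hhom y c
  calc T x i ≤ T (fun j => y j + c) i := h1 i
  _ = T y i + c := by rw [h2]

lemma forall_lam_le {A B : ℝ} (h : ∀ l : ℝ, 0 < l → l < 1 → A ≤ l * B) : A ≤ 0 := by
  by_contra hA
  push_neg at hA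
  rcases le_or_gt B 0 with hB | hB
  · have := h (1/2) (by norm_num) (by norm_num)
    nlinarith
  · have hl1 : (0:ℝ) < min (1/2) (A / (2*B)) := by
      have : 0 < A / (2*B) := by positivity
      simp [lt_min_iff, this]
    have hl2 : min (1/2) (A / (2*B)) < 1 := by
      have : min (1/2) (A / (2*B)) ≤ 1/2 := min_le_left _ _
      linarith
    have := h _ hl1 hl2
    have hle : min (1/2) (A / (2*B)) * B ≤ (A / (2*B)) * B := by
      apply mul_le_mul_of_nonneg_right (min_le_right _ _) (le_of_lt hB)
    have : A ≤ (A / (2*B)) * B := le_trans this hle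
    rw [div_mul_eq_mul_div, mul_comm] at this
    have h2 : B * A / (2 * B) = A / 2 := by
      field_simp
    rw [h2] at this
    linarith

/-- If `T_i` is constant on the ray `s•e_j`, `s ≥ 0`, then `j ∉ supp T_i`. -/
lemma not_supp_of_ray_const (hmono : Monotone T) (hhom : AddHomog n T)
    (hconv : ∀ i, ConvexOn ℝ Set.univ (fun x => T x i)) (i j : Fin n)
    (h : ∀ s, 0 ≤ s → T (sing j s) i = T (fun _ => 0) i) :
    j ∉ Supp n (fun x => T x i) := by
  classical
  -- step 1 : adding t ≥ 0 in coordinate j does not increase the value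
  have key : ∀ (x : Fin n → ℝ) (t : ℝ), 0 ≤ t →
      T (fun k => x k + sing j t k) i = T x i := by
    intro x t ht
    have hub : T (fun k => x k + sing j t k) i ≤ T x i := by
      rcases eq_or_lt_of_le ht with rfl | ht
      · have : (fun k => x k + sing j (0:ℝ) k) = x := by
          funext k; simp [sing]
        rw [this]
      -- t > 0
      set N : ℝ := max (Finset.univ.sup' ⟨j, Finset.mem_univ j⟩ x) 0 with hN
      have hNx : ∀ k, x k ≤ N := fun k =>
        le_max_of_le_left (Finset.le_sup' x (Finset.mem_univ k))
      have hN0 : 0 ≤ N := le_max_right _ _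
      have main : ∀ l : ℝ, 0 < l → l < 1 →
          T (fun k => x k + sing j t k) i - T x i ≤ l * (N + T (fun _ => 0) i - T x i) := by
        intro l hl0 hl1
        have h1l : (1:ℝ) - l ≠ 0 := by linarith
        have hl0' : l ≠ 0 := ne_of_gt hl0
        have hconvi := (hconv i).2 (Set.mem_univ ((1/(1-l)) • x))
          (Set.mem_univ (sing j (t/l)))
          (show (0:ℝ) ≤ 1 - l by linarith) (show (0:ℝ) ≤ l from le_of_lt hl0)
          (show (1 - l) + l = 1 by ring)
        have hcomb : (1-l) • ((1/(1-l)) • x) + l • (sing j (t/l)) =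
            (fun k => x k + sing j t k) := by
          funext k
          simp only [Pi.add_apply, Pi.smul_apply, smul_eq_mul, sing]
          by_cases hk : k = j
          · subst hk; rw [if_pos rfl, if_pos rfl]; field_simp
          · simp only [if_neg hk]
            simp; field_simp
        rw [hcomb] at hconvi
        have hray : T (sing j (t/l)) i = T (fun _ => 0) i :=
          h _ (le_of_lt (div_pos ht hl0))
        have hsc : T ((1/(1-l)) • x) i ≤ T x i + (l/(1-l)) * N := by
          apply nonexp hmono hhom
          intro k
          have : (1/(1-l)) * x k - x k = (l/(1-l)) * x k := by
            field_simp
            ring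
          have h2 : (l/(1-l)) * x k ≤ (l/(1-l)) * N := by
            apply mul_le_mul_of_nonneg_left (hNx k)
            exact (div_pos hl0 (by linarith)).le
          simp only [Pi.smul_apply, smul_eq_mul]
          linarith
        have := hconvi
        simp only [smul_eq_mul] at this
        have hfin : T (fun k => x k + sing j t k) i ≤
            (1-l) * (T x i + (l/(1-l)) * N) + l * T (fun _ => 0) i := by
          calc T (fun k => x k + sing j t k) i
              ≤ (1-l) * T ((1/(1-l)) • x) i + l * T (sing j (t/l)) i := this
          _ ≤ (1-l) * (T x i + (l/(1-l)) * N) + l * T (fun _ => 0) i := by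
              rw [hray]
              have h1l : (0:ℝ) < 1 - l := by linarith
              exact add_le_add (mul_le_mul_of_nonneg_left hsc (by linarith)) le_rfl
        have hexp : (1-l) * (T x i + (l/(1-l)) * N) + l * T (fun _ => 0) i
            = (1-l) * T x i + l * N + l * T (fun _ => 0) i := by
          have h1l : (1:ℝ) - l ≠ 0 := by linarith
          field_simp
        rw [hexp] at hfin
        linarith
      have := forall_lam_le main
      linarith
    have hlb : T x i ≤ T (fun k => x k + sing j t k) i := by
      apply hmono
      intro k
      simp only [sing]
      by_cases hk : k = j <;> simp [hk, ht]
    linarith [hub, hlb]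
  -- step 2 : conclude
  intro hsupp
  obtain ⟨x, y, hagree, hne⟩ := hsupp
  simp only [ne_eq] at hne
  apply hne
  rcases le_total (x j) (y j) with hxy | hxy
  · have : y = fun k => x k + sing j (y j - x j) k := by
      funext k
      by_cases hk : k = j
      · subst hk; simp [sing]
      · simp [sing, hk, hagree k hk]
    show T x i = T y i
    rw [this, key x (y j - x j) (by linarith)]
  · have : x = fun k => y k + sing j (x j - y j) k := by
      funext k
      by_cases hk : k = j
      · subst hk; simp [sing]
      · simp [sing, hk, hagree k hk]
    rw [this, key y (x j - y j) (by linarith)]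

/-- If `j ∈ supp T_i` then `T_i` grows at least linearly along `s•e_j`. -/
lemma growth_of_supp (hmono : Monotone T) (hhom : AddHomog n T)
    (hconv : ∀ i, ConvexOn ℝ Set.univ (fun x => T x i)) (i j : Fin n)
    (hj : j ∈ Supp n (fun x => T x i)) :
    ∃ δ c : ℝ, 0 < δ ∧ ∀ s, 0 ≤ s →
      T (fun _ => 0) i + δ * s - c ≤ T (sing j s) i := by
  classical
  have hmonoray : ∀ s s' : ℝ, s ≤ s' → T (sing j s) i ≤ T (sing j s') i := by
    intro s s' hss
    apply hmono
    intro k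
    simp only [sing]
    by_cases hk : k = j <;> simp [hk, hss]
  have hne : ¬ (∀ s, 0 ≤ s → T (sing j s) i = T (fun _ => 0) i) := by
    intro hcon
    exact not_supp_of_ray_const hmono hhom hconv i j hcon hj
  push_neg at hne
  obtain ⟨s₂, hs₂0, hs₂⟩ := hne
  have hzero : sing j (0:ℝ) = (fun _ => (0:ℝ)) := by funext k; simp [sing]
  have hlt : T (fun _ => 0) i < T (sing j s₂) i := by
    rcases lt_or_eq_of_le (hzero ▸ hmonoray 0 s₂ hs₂0) with h | h
    · exact h
    · exact absurd h.symm hs₂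
  have hs₂pos : 0 < s₂ := by
    rcases eq_or_lt_of_le hs₂0 with rfl | h
    · rw [hzero] at hs₂; exact absurd rfl hs₂
    · exact h
  set δ := (T (sing j s₂) i - T (fun _ => 0) i) / s₂ with hδ
  have hδpos : 0 < δ := by
    apply div_pos (by linarith) hs₂pos
  refine ⟨δ, δ * s₂, hδpos, ?_⟩
  intro s hs
  rcases le_or_gt s s₂ with hcase | hcase
  · have h1 : T (fun _ => 0) i ≤ T (sing j s) i := hzero ▸ hmonoray 0 s hs
    nlinarith
  · -- convexity: sing j s₂ = (1 - s₂/s) • 0 + (s₂/s) • sing j s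
    have hspos : (0:ℝ) < s := lt_trans hs₂pos hcase
    have hconvi := (hconv i).2 (Set.mem_univ (fun _ => (0:ℝ)))
      (Set.mem_univ (sing j s))
      (show (0:ℝ) ≤ 1 - s₂/s by
        rw [sub_nonneg]; exact div_le_one_of_le₀ (le_of_lt hcase) (le_of_lt hspos))
      (show (0:ℝ) ≤ s₂/s by positivity) (show (1 - s₂/s) + s₂/s = 1 by ring)
    have hcomb : (1 - s₂/s) • (fun _ => (0:ℝ)) + (s₂/s) • sing j s = sing j s₂ := by
      funext k
      simp only [Pi.add_apply, Pi.smul_apply, smul_eq_mul, sing]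
      by_cases hk : k = j
      · simp [hk]; field_simp
      · simp [hk]
    rw [hcomb] at hconvi
    simp only [smul_eq_mul] at hconvi
    -- hconvi : T (sing j s₂) i ≤ (1 - s₂/s) * T 0 i + (s₂/s) * T (sing j s) i
    have hs0 : s ≠ 0 := ne_of_gt hspos
    have h1 : s * T (sing j s₂) i ≤ (s - s₂) * T (fun _ => 0) i + s₂ * T (sing j s) i := by
      have := mul_le_mul_of_nonneg_left hconvi (le_of_lt hspos)
      have hrw : s * ((1 - s₂/s) * T (fun _ => 0) i + s₂/s * T (sing j s) i)
          = (s - s₂) * T (fun _ => 0) i + s₂ * T (sing j s) i := by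
        field_simp
      linarith [hrw ▸ this]
    have hcross : (T (sing j s₂) i - T (fun _ => 0) i) * s
        ≤ (T (sing j s) i - T (fun _ => 0) i) * s₂ := by nlinarith [h1]
    have h2 : δ ≤ (T (sing j s) i - T (fun _ => 0) i) / s := by
      rw [hδ, div_le_div_iff₀ hs₂pos hspos]
      linarith [hcross]
    have h3 : δ * s ≤ T (sing j s) i - T (fun _ => 0) i :=
      (le_div_iff₀ hspos).mp h2
    nlinarith [h3, mul_nonneg (le_of_lt hδpos) hs₂0]
  lemma reach_closed (v : Fin n) : ∀ i ∈ Reach n T v, ∀ j, GEdge n T i j → j ∈ Reach n T v :=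
  fun _ hi _ hij => Relation.ReflTransGen.tail hi hij

lemma reach_subset_of_closed {D : Set (Fin n)}
    (hD : ∀ i ∈ D, ∀ j, GEdge n T i j → j ∈ D) {v : Fin n} (hv : v ∈ D) :
    Reach n T v ⊆ D := by
  intro w hw
  induction hw with
  | refl => exact hv
  | tail _ hbc ih => exact hD _ ih _ hbc

lemma exists_finalClass_subset {D : Set (Fin n)} (hDne : D.Nonempty)
    (hD : ∀ i ∈ D, ∀ j, GEdge n T i j → j ∈ D) :
    ∃ C : Set (Fin n), FinalClass n T C ∧ C ⊆ D := by
  classical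
  obtain ⟨v₀, hv₀⟩ := hDne
  -- pick v in D minimizing the cardinality of Reach
  obtain ⟨v, hvD, hvmin⟩ := (Set.toFinite D).toFinset.exists_min_image
    (fun w => (Reach n T w).ncard) ⟨v₀, by simpa using hv₀⟩
  simp only [Set.Finite.mem_toFinset] at hvD
  have hvmin' : ∀ w ∈ D, (Reach n T v).ncard ≤ (Reach n T w).ncard := by
    intro w hw
    exact hvmin w (by simpa using hw)
  refine ⟨Reach n T v, ⟨⟨v, Relation.ReflTransGen.refl⟩, reach_closed v, ?_⟩,
    reach_subset_of_closed hD hvD⟩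
  intro u hu u' hu'
  have huD : u ∈ D := reach_subset_of_closed hD hvD hu
  have hsub : Reach n T u ⊆ Reach n T v := by
    intro w hw
    exact Relation.ReflTransGen.trans hu hw
  have hcard : (Reach n T v).ncard ≤ (Reach n T u).ncard := hvmin' u huD
  have heq : Reach n T u = Reach n T v :=
    Set.eq_of_subset_of_ncard_le hsub hcard (Set.toFinite _)
  rw [← heq] at hu'
  exact hu'

lemma finalClass_eq_of_mem {C C' : Set (Fin n)} (hC : FinalClass n T C)
    (hC' : FinalClass n T C') {v : Fin n} (hv : v ∈ C) (hv' : v ∈ C') : C = C' := by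
  apply Set.eq_of_subset_of_subset
  · intro u hu
    exact reach_subset_of_closed hC'.2.1 hv' (hC.2.2 v hv u hu)
  · intro u hu
    exact reach_subset_of_closed hC.2.1 hv (hC'.2.2 v hv' u hu)

lemma reach_contains_unique_final {C : Set (Fin n)} (hC : FinalClass n T C)
    (huniq : ∀ C' : Set (Fin n), FinalClass n T C' → C' = C) (v : Fin n) :
    C ⊆ Reach n T v := by
  obtain ⟨C', hC', hsub⟩ := exists_finalClass_subset
    ⟨v, Relation.ReflTransGen.refl⟩ (reach_closed v)
  rw [huniq C' hC'] at hsub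
  exact hsub

lemma unbounded_of_KD (hmono : Monotone T) (hhom : AddHomog n T)
    {K D : Set (Fin n)} (hKne : K.Nonempty) (hDne : D.Nonempty)
    (hdisj : ∀ i ∈ D, i ∉ K)
    (hDcl : ∀ i ∈ D, ∀ j, GEdge n T i j → j ∈ D)
    (hb : ∀ i ∈ K, ∃ b : ℝ, ∀ t : ℝ, 0 ≤ t → b ≤ T (Kᶜ.indicator fun _ => -t) i) :
    ∃ α β : ℝ, α ≤ β ∧ ∀ t : ℝ, 0 ≤ t →
      ∃ x ∈ addSliceSpace n T α β, t ≤ hilbertSeminorm n x := by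
  classical
  obtain ⟨iK, hiK⟩ := hKne
  obtain ⟨iD, hiD⟩ := hDne
  haveI : Nonempty (Fin n) := ⟨iK⟩
  set Zf : Fin n → ℝ := fun _ => 0 with hZf
  have hUnivNe : (Finset.univ : Finset (Fin n)).Nonempty := ⟨iK, Finset.mem_univ iK⟩
  set maxT0 : ℝ := Finset.univ.sup' hUnivNe (fun i => T Zf i) with hmaxT0
  set minT0 : ℝ := Finset.univ.inf' hUnivNe (fun i => T Zf i) with hminT0
  set β : ℝ := maxT0 + 1 with hβ
  -- the lower bounds on K
  have hbf : ∀ i : Fin n, ∃ b : ℝ, i ∈ K → ∀ t : ℝ, 0 ≤ t →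
      b ≤ T (Kᶜ.indicator fun _ => -t) i := by
    intro i
    by_cases hi : i ∈ K
    · obtain ⟨b, hb'⟩ := hb i hi
      exact ⟨b, fun _ => hb'⟩
    · exact ⟨0, fun h => absurd h hi⟩
  choose bf hbfspec using hbf
  have hKfinne : ((Set.toFinite K).toFinset).Nonempty := ⟨iK, by simpa using hiK⟩
  set minb : ℝ := ((Set.toFinite K).toFinset).inf' hKfinne bf with hminb
  set α : ℝ := min minT0 minb with hα
  have hind0 : (Kᶜ.indicator fun _ => (-0 : ℝ)) = Zf := by
    funext j
    simp [Set.indicator_apply, hZf]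
  have hbf_le : ∀ i ∈ K, bf i ≤ maxT0 := by
    intro i hi
    have := hbfspec i hi 0 le_rfl
    rw [hind0] at this
    exact le_trans this (Finset.le_sup' (fun i => T Zf i) (Finset.mem_univ i))
  have hαβ : α ≤ β := by
    have h1 : minT0 ≤ maxT0 := le_trans
      (Finset.inf'_le (fun i => T Zf i) (Finset.mem_univ iK))
      (Finset.le_sup' (fun i => T Zf i) (Finset.mem_univ iK))
    have h2 : α ≤ minT0 := min_le_left _ _
    simp only [hβ]
    linarith
  refine ⟨α, β, hαβ, ?_⟩
  intro t ht
  set z : ℕ → Fin n → ℝ := Wseq n T K t β with hz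
  have hz0 : z 0 = K.indicator fun _ => t := rfl
  have hzs : ∀ m i, z (m+1) i = max (K.indicator (fun _ => t) i) (T (z m) i - β) :=
    fun m i => rfl
  -- upper bound by t
  have hTt : T (fun _ => t) = fun i => T Zf i + t := by
    have := hhom Zf t
    have h2 : (fun i => Zf i + t) = (fun _ => t) := by funext i; simp [hZf]
    rw [h2] at this
    exact this
  have hub : ∀ m i, z m i ≤ t := by
    intro m
    induction m with
    | zero =>
      intro i
      rw [hz0]
      by_cases hi : i ∈ K <;> simp [Set.indicator_apply, hi, ht]
    | succ m ih =>
      intro i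
      rw [hzs]
      apply max_le
      · by_cases hi : i ∈ K <;> simp [Set.indicator_apply, hi, ht]
      · have h1 : T (z m) i ≤ T (fun _ => t) i := by
          apply hmono (fun j => ih j) i
        rw [hTt] at h1
        beta_reduce at h1
        have h2 : T Zf i ≤ maxT0 := Finset.le_sup' (fun i => T Zf i) (Finset.mem_univ i)
        simp only [hβ]
        linarith
  -- monotone in m
  have hmonostep : ∀ m, z m ≤ z (m+1) := by
    intro m
    induction m with
    | zero =>
      intro i
      rw [hzs]
      exact le_max_left _ _
    | succ m ih =>
      intro i
      rw [hzs, hzs]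
      apply max_le (le_max_left _ _)
      apply le_max_of_le_right
      have : T (z m) i ≤ T (z (m+1)) i := hmono ih i
      linarith
  have hmonoz : Monotone z := monotone_nat_of_le_succ hmonostep
  -- the limit
  have hbddi : ∀ i, BddAbove (Set.range (fun m => z m i)) := by
    intro i
    refine ⟨t, ?_⟩
    rintro y ⟨m, rfl⟩
    exact hub m i
  set Z : Fin n → ℝ := fun i => ⨆ m, z m i with hZdef
  have hzZ : ∀ m i, z m i ≤ Z i := fun m i => le_ciSup (hbddi i) m
  have hZt : ∀ i, Z i ≤ t := fun i => ciSup_le (fun m => hub m i)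
  have hZ0 : ∀ i, 0 ≤ Z i := by
    intro i
    refine le_trans ?_ (hzZ 0 i)
    rw [hz0]
    by_cases hi : i ∈ K <;> simp [Set.indicator_apply, hi, ht]
  -- T Z i - β ≤ Z i
  have hge2 : ∀ i, T Z i - β ≤ Z i := by
    intro i
    have key : ∀ ε : ℝ, 0 < ε → T Z i - β ≤ Z i + ε := by
      intro ε hε
      have hj : ∀ j : Fin n, ∃ m, Z j - ε < z m j := by
        intro j
        have : Z j - ε < Z j := by linarith
        exact exists_lt_of_lt_ciSup this
      choose mj hmj using hj
      set M : ℕ := Finset.univ.sup mj with hM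
      have hZzM : ∀ j, Z j ≤ z M j + ε := by
        intro j
        have h1 : z (mj j) j ≤ z M j := hmonoz (Finset.le_sup (Finset.mem_univ j)) j
        have := hmj j
        linarith
      have h2 : T Z i ≤ T (z M) i + ε := nonexp hmono hhom hZzM i
      have h3 : T (z M) i - β ≤ z (M+1) i := by
        rw [hzs]; exact le_max_right _ _
      have h4 := hzZ (M+1) i
      linarith
    by_contra hcon
    push_neg at hcon
    have := key ((T Z i - β - Z i)/2) (by linarith)
    linarith
  have hge1 : ∀ i, K.indicator (fun _ => t) i ≤ Z i := by
    intro i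
    refine le_trans ?_ (hzZ 0 i)
    rw [hz0]
  -- fixed point case analysis
  have hZcase : ∀ i, Z i = K.indicator (fun _ => t) i ∨ Z i = T Z i - β := by
    intro i
    have hle : Z i ≤ max (K.indicator (fun _ => t) i) (T Z i - β) := by
      apply ciSup_le
      intro m
      cases m with
      | zero =>
        rw [hz0]; exact le_max_left _ _
      | succ m =>
        rw [hzs]
        apply max_le (le_max_left _ _)
        apply le_max_of_le_right
        have : T (z m) i ≤ T Z i := hmono (fun j => hzZ m j) i
        linarith
    rcases le_max_iff.mp hle with h | h
    · exact Or.inl (le_antisymm h (hge1 i))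
    · exact Or.inr (le_antisymm h (hge2 i))
  -- values on K
  have hZK : ∀ i ∈ K, Z i = t := by
    intro i hi
    apply le_antisymm (hZt i)
    have := hge1 i
    rwa [Set.indicator_of_mem hi] at this
  -- values on D : take the max over D
  obtain ⟨jD, hjD, hjDmax⟩ := ((Set.toFinite D).toFinset).exists_max_image Z
    ⟨iD, by simpa using hiD⟩
  simp only [Set.Finite.mem_toFinset] at hjD
  have hjDmax' : ∀ i ∈ D, Z i ≤ Z jD := fun i hi => hjDmax i (by simpa using hi)
  have hZD : Z jD ≤ 0 := by
    rcases hZcase jD with h | h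
    · rw [h, Set.indicator_of_notMem (hdisj jD hjD)]
    · exfalso
      have hsupp : ∀ j ∈ Supp n (fun x => T x jD), Z j = (fun k => min (Z k) (Z jD)) j := by
        intro j hj
        have hjDin : j ∈ D := hDcl jD hjD j hj
        simp only [min_eq_left (hjDmax' j hjDin)]
      have heq : T Z jD = T (fun k => min (Z k) (Z jD)) jD := supp_indep hsupp
      have hle : T (fun k => min (Z k) (Z jD)) jD ≤ T Zf jD + Z jD := by
        apply nonexp hmono hhom
        intro k
        simp [hZf, min_le_right]
      have hT0 : T Zf jD ≤ maxT0 := Finset.le_sup' (fun i => T Zf i) (Finset.mem_univ jD)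
      rw [heq] at h
      simp only [hβ] at h
      linarith
  -- slice membership
  have hslice : Z ∈ addSliceSpace n T α β := by
    intro i
    constructor
    · rcases hZcase i with h | h
      · by_cases hi : i ∈ K
        · rw [h, Set.indicator_of_mem hi]
          -- T Z i ≥ bf i + t
          have hz0eq : z 0 = fun j => (Kᶜ.indicator fun _ => -t) j + t := by
            rw [hz0]
            funext j
            by_cases hj : j ∈ K <;>
              simp [Set.indicator_apply, hj, Set.mem_compl_iff]
          have h1 : T (z 0) i ≤ T Z i := hmono (fun j => hzZ 0 j) i
          have h2 : T (z 0) i = T (Kᶜ.indicator fun _ => -t) i + t := by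
            rw [hz0eq]
            rw [hhom (Kᶜ.indicator fun _ => -t) t]
          have h3 : bf i ≤ T (Kᶜ.indicator fun _ => -t) i := hbfspec i hi t ht
          have h4 : α ≤ bf i := by
            apply le_trans (min_le_right _ _)
            exact Finset.inf'_le bf (by simpa using hi)
          linarith
        · rw [h, Set.indicator_of_notMem hi]
          have h1 : T Zf i ≤ T Z i := hmono (fun j => hZ0 j) i
          have h2 : α ≤ minT0 := min_le_left _ _
          have h3 : minT0 ≤ T Zf i := Finset.inf'_le (fun i => T Zf i) (Finset.mem_univ i)
          linarith
      · rw [h]; linarith [hαβ]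
    · linarith [hge2 i]
  refine ⟨Z, hslice, ?_⟩
  -- seminorm at least t
  have h1 : Z iK ≤ ⨆ i, Z i := le_ciSup (Set.Finite.bddAbove (Set.finite_range Z)) iK
  have h2 : (⨅ i, Z i) ≤ Z jD := ciInf_le (Set.Finite.bddBelow (Set.finite_range Z)) jD
  have h3 : Z iK = t := hZK iK hiK
  unfold hilbertSeminorm
  have h4 : Z jD = 0 := le_antisymm hZD (hZ0 jD)
  rw [h3] at h1
  rw [h4] at h2
  linarith

lemma hstage_mono (C : Set (Fin n)) : Monotone (HStage n T C) := by
  apply monotone_nat_of_le_succ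
  intro k
  exact Set.subset_union_left

lemma fin_subset_union {R : ℕ → Set (Fin n)} (hR : Monotone R) (s : Finset (Fin n))
    (h : ∀ j ∈ s, j ∈ ⋃ k, R k) : ∃ k, ∀ j ∈ s, j ∈ R k := by
  classical
  induction s using Finset.induction_on with
  | empty => exact ⟨0, by simp⟩
  | @insert a s ha ih =>
    obtain ⟨k₁, hk₁⟩ := ih (fun j hj => h j (Finset.mem_insert_of_mem hj))
    obtain ⟨k₂, hk₂⟩ := Set.mem_iUnion.mp (h a (Finset.mem_insert_self a s))
    refine ⟨max k₁ k₂, ?_⟩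
    intro w hw
    rcases Finset.mem_insert.mp hw with rfl | hw
    · exact hR (le_max_right k₁ k₂) hk₂
    · exact hR (le_max_left k₁ k₂) (hk₁ w hw)

lemma subset_stage_of_finite {R : ℕ → Set (Fin n)} (hR : Monotone R) {J : Set (Fin n)}
    (hJ : J.Finite) (h : J ⊆ ⋃ k, R k) : ∃ k, J ⊆ R k := by
  obtain ⟨k, hk⟩ := fin_subset_union hR hJ.toFinset
    (fun j hj => h ((Set.Finite.mem_toFinset hJ).mp hj))
  exact ⟨k, fun j hj => hk j ((Set.Finite.mem_toFinset hJ).mpr hj)⟩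

lemma hreach_subset_stages (C : Set (Fin n)) : HReach n T C ⊆ ⋃ k, HStage n T C k := by
  apply Set.sInter_subset_of_mem
  constructor
  · exact Set.subset_iUnion_of_subset 0 (fun i hi => hi)
  · intro J i hJne hJsub hiJ hunb
    obtain ⟨k, hk⟩ := subset_stage_of_finite (hstage_mono C) (Set.toFinite J) hJsub
    apply Set.mem_iUnion_of_mem (k+1)
    exact Or.inr ⟨J, hJne, hk, hiJ, hunb⟩

lemma bounded_of_unique (hn : 1 ≤ n) (hmono : Monotone T) (hhom : AddHomog n T)
    (hconv : ∀ i, ConvexOn ℝ Set.univ (fun x => T x i))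
    {C : Set (Fin n)} (hC : FinalClass n T C)
    (huniq : ∀ C' : Set (Fin n), FinalClass n T C' → C' = C)
    (hreach : HReach n T C = Set.univ) (α β : ℝ) (hαβ : α ≤ β) :
    ∃ M : ℝ, ∀ x ∈ addSliceSpace n T α β, hilbertSeminorm n x ≤ M := by
  classical
  obtain ⟨i₀, hi₀C⟩ := hC.1
  haveI : Nonempty (Fin n) := ⟨i₀⟩
  have hUnivNe : (Finset.univ : Finset (Fin n)).Nonempty := ⟨i₀, Finset.mem_univ i₀⟩
  set mfun : (Fin n → ℝ) → ℝ := fun x => Finset.univ.inf' hUnivNe x with hmfun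
  have hm_le : ∀ (x : Fin n → ℝ) (k : Fin n), mfun x ≤ x k :=
    fun x k => Finset.inf'_le x (Finset.mem_univ k)
  -- Path propagation bound
  have P2 : ∀ v i : Fin n, Relation.ReflTransGen (GEdge n T) v i →
      ∃ ψ : ℝ → ℝ, Monotone ψ ∧ ∀ x ∈ addSliceSpace n T α β,
        x i - mfun x ≤ ψ (x v - mfun x) := by
    intro v i h
    refine Relation.ReflTransGen.head_induction_on h
      ⟨id, monotone_id, fun x _ => le_refl _⟩ ?_
    intro u w h' hrest ih
    · obtain ⟨ψ, hψmono, hψ⟩ := ih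
      obtain ⟨δ, c', hδ, hgr⟩ := growth_of_supp hmono hhom hconv u w h'
      refine ⟨fun s => ψ ((s + β - T (fun _ => 0) u + c')/δ), ?_, ?_⟩
      · apply hψmono.comp
        intro s1 s2 hs
        apply div_le_div_of_nonneg_right (by linarith) hδ.le
      · intro x hx
        set m := mfun x with hm
        have hcmp : ∀ k, (fun k => sing w (x w - m) k + m) k ≤ x k := by
          intro k
          simp only [sing]
          by_cases hk : k = w
          · subst hk; simp
          · simp [hk]; exact hm_le x k
        have h1 : T (fun k => sing w (x w - m) k + m) u ≤ T x u := hmono hcmp u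
        have h2 : T (fun k => sing w (x w - m) k + m) u
            = T (sing w (x w - m)) u + m := by
          rw [hhom (sing w (x w - m)) m]
        have h3 : T (fun _ => 0) u + δ * (x w - m) - c' ≤ T (sing w (x w - m)) u :=
          hgr _ (by linarith [hm_le x w])
        have h4 : T x u ≤ β + x u := (hx u).2
        have h5 : x w - m ≤ (x u - m + β - T (fun _ => 0) u + c')/δ := by
          rw [le_div_iff₀ hδ]
          nlinarith
        show x i - m ≤ ψ ((x u - m + β - T (fun _ => 0) u + c')/δ)
        calc x i - m ≤ ψ (x w - m) := hψ x hx
        _ ≤ ψ ((x u - m + β - T (fun _ => 0) u + c')/δ) := hψmono h5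
  -- base bound on the final class
  have hbase : ∀ i ∈ C, ∃ S : ℝ, ∀ x ∈ addSliceSpace n T α β, x i ≤ mfun x + S := by
    intro i hi
    have hallv : ∀ v : Fin n, ∃ ψ : ℝ → ℝ, Monotone ψ ∧
        ∀ x ∈ addSliceSpace n T α β, x i - mfun x ≤ ψ (x v - mfun x) :=
      fun v => P2 v i (reach_contains_unique_final hC huniq v hi)
    choose ψf hψf using hallv
    refine ⟨Finset.univ.sup' hUnivNe (fun v => ψf v 0), ?_⟩
    intro x hx
    obtain ⟨v, _, hveq⟩ := Finset.exists_mem_eq_inf' hUnivNe x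
    have h1 := (hψf v).2 x hx
    have h2 : x v - mfun x = 0 := by rw [hmfun]; rw [← hveq]; ring
    rw [h2] at h1
    have h3 : ψf v 0 ≤ Finset.univ.sup' hUnivNe (fun v => ψf v 0) :=
      Finset.le_sup' (fun v => ψf v 0) (Finset.mem_univ v)
    linarith
  -- stage-wise bound
  have hstageP : ∀ k, ∀ i ∈ HStage n T C k, ∃ γ : ℝ → ℝ, Grows γ ∧
      ∀ x ∈ addSliceSpace n T α β, (∀ j, x j ≤ 0) → x i ≤ -γ (-(mfun x)) := by
    intro k
    induction k with
    | zero =>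
      intro i hi
      obtain ⟨S, hS⟩ := hbase i hi
      refine ⟨fun s => s - S, fun c => ⟨c + S, fun s hs => by
        show c ≤ s - S; linarith⟩, ?_⟩
      intro x hx _
      have := hS x hx
      show x i ≤ -(-(mfun x) - S)
      linarith
    | succ k ih =>
      intro i hi
      rcases hi with hi | hi
      · exact ih i hi
      · obtain ⟨J, hJne, hJsub, hiJ, hunb⟩ := hi
        have hγj : ∀ j : Fin n, ∃ γ : ℝ → ℝ, j ∈ J → (Grows γ ∧
            ∀ x ∈ addSliceSpace n T α β, (∀ j', x j' ≤ 0) → x j ≤ -γ (-(mfun x))) := by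
          intro j
          by_cases hj : j ∈ J
          · obtain ⟨γ, hγ⟩ := ih j (hJsub hj)
            exact ⟨γ, fun _ => hγ⟩
          · exact ⟨id, fun h => absurd h hj⟩
        choose γf hγf using hγj
        have hJFinne : ((Set.toFinite J).toFinset).Nonempty := by
          obtain ⟨j, hj⟩ := hJne
          exact ⟨j, by simpa using hj⟩
        set γJ : ℝ → ℝ := fun s => ((Set.toFinite J).toFinset).inf' hJFinne
          (fun j => γf j s) with hγJ
        have hγJGrows : Grows γJ := by
          intro c
          have hs0 : ∀ j : Fin n, ∃ s₀ : ℝ, j ∈ J → ∀ s, s₀ ≤ s → c ≤ γf j s := by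
            intro j
            by_cases hj : j ∈ J
            · obtain ⟨s₀, hs₀⟩ := ((hγf j hj).1) c
              exact ⟨s₀, fun _ => hs₀⟩
            · exact ⟨0, fun h => absurd h hj⟩
          choose s0f hs0f using hs0
          refine ⟨((Set.toFinite J).toFinset).sup' hJFinne s0f, ?_⟩
          intro s hs
          rw [hγJ]
          apply Finset.le_inf'
          intro j hj
          have hjJ : j ∈ J := by simpa using hj
          apply hs0f j hjJ
          exact le_trans (Finset.le_sup' s0f hj) hs
        set g : ℝ → ℝ := fun s => -(T (J.indicator fun _ => -s) i) with hg
        have hgmono : ∀ s s' : ℝ, s ≤ s' → g s ≤ g s' := by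
          intro s s' hss
          rw [hg]
          simp only [neg_le_neg_iff]
          apply hmono _ i
          intro k
          by_cases hk : k ∈ J <;> simp [Set.indicator_apply, hk, hss]
        have hgGrows : ∀ c : ℝ, ∃ t₀ : ℝ, ∀ s, t₀ ≤ s → c ≤ g s := by
          intro c
          obtain ⟨t₀, ht₀0, hlt⟩ := hunb (-c)
          refine ⟨t₀, fun s hs => ?_⟩
          have h1 : g t₀ ≥ c := by rw [hg]; simp only; linarith
          linarith [hgmono t₀ s hs]
        refine ⟨fun s => g (max (γJ s) 0) + α, ?_, ?_⟩
        · intro c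
          obtain ⟨t₀, ht₀⟩ := hgGrows (c - α)
          obtain ⟨s₀, hs₀⟩ := hγJGrows t₀
          refine ⟨s₀, fun s hs => ?_⟩
          have h1 : t₀ ≤ max (γJ s) 0 := le_trans (hs₀ s hs) (le_max_left _ _)
          show c ≤ g (max (γJ s) 0) + α
          linarith [ht₀ _ h1]
        · intro x hx hx0
          set tx := -(mfun x) with htx
          set sstar := max (γJ tx) 0 with hsstar
          have hxj : ∀ j ∈ J, x j ≤ -sstar := by
            intro j hj
            have h1 : x j ≤ -γJ tx := by
              have h2 := (hγf j hj).2 x hx hx0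
              have h3 : γJ tx ≤ γf j tx := Finset.inf'_le _ (by simpa using hj)
              linarith
            have h2 : x j ≤ 0 := hx0 j
            rw [hsstar]
            rcases le_total (γJ tx) 0 with h | h
            · rw [max_eq_right h]; simpa
            · rw [max_eq_left h]; exact h1
          have hcomp : ∀ k, x k ≤ J.indicator (fun _ => -sstar) k := by
            intro k
            by_cases hk : k ∈ J
            · rw [Set.indicator_of_mem hk]; exact hxj k hk
            · rw [Set.indicator_of_notMem hk]; exact hx0 k
          have h1 : T x i ≤ T (J.indicator fun _ => -sstar) i := hmono hcomp i
          have h2 : α + x i ≤ T x i := (hx i).1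
          have h3 : T (J.indicator fun _ => -sstar) i = -g sstar := by rw [hg]; ring
          show x i ≤ -(g sstar + α)
          linarith
  -- conclusion
  have hall : ∀ i : Fin n, ∃ γ : ℝ → ℝ, Grows γ ∧
      ∀ x ∈ addSliceSpace n T α β, (∀ j, x j ≤ 0) → x i ≤ -γ (-(mfun x)) := by
    intro i
    have hiU : i ∈ HReach n T C := by rw [hreach]; trivial
    have := hreach_subset_stages C hiU
    obtain ⟨k, hk⟩ := Set.mem_iUnion.mp this
    exact hstageP k i hk
  choose γf hγf using hall
  have hs0 : ∀ i : Fin n, ∃ s₀ : ℝ, ∀ s, s₀ ≤ s → 1 ≤ γf i s :=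
    fun i => (hγf i).1 1
  choose s0f hs0f using hs0
  set M : ℝ := max 0 (Finset.univ.sup' hUnivNe s0f) with hM
  refine ⟨M, ?_⟩
  intro x hx
  set μ := Finset.univ.sup' hUnivNe x with hμ
  set y : Fin n → ℝ := fun i => x i + (-μ) with hy
  have hyapp : ∀ j, y j = x j - μ := by
    intro j
    simp only [hy]
    ring
  have hyslice : y ∈ addSliceSpace n T α β := by
    intro i
    have h2 : T y i = T x i + (-μ) := by
      have := congrFun (hhom x (-μ)) i
      simpa [hy] using this
    rw [h2, hyapp i]
    constructor
    · linarith [(hx i).1]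
    · linarith [(hx i).2]
  have hμ_ge : ∀ j, x j ≤ μ := fun j => Finset.le_sup' x (Finset.mem_univ j)
  have hy0 : ∀ j, y j ≤ 0 := by
    intro j
    rw [hyapp j]
    linarith [hμ_ge j]
  have hmy : mfun y = mfun x - μ := by
    apply le_antisymm
    · obtain ⟨w, _, hw⟩ := Finset.exists_mem_eq_inf' hUnivNe x
      have hw' : mfun x = x w := hw
      have h1 : mfun y ≤ y w := hm_le y w
      rw [hyapp w] at h1
      linarith
    · apply Finset.le_inf'
      intro w _
      have : y w = x w - μ := hyapp w
      show mfun x - μ ≤ y w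
      rw [this]
      linarith [hm_le x w]
  obtain ⟨v, _, hveq⟩ := Finset.exists_mem_eq_sup' hUnivNe x
  have hveq' : μ = x v := hveq
  have hyv : y v = 0 := by rw [hyapp v, hveq']; ring
  have hbv := (hγf v).2 y hyslice hy0
  rw [hyv] at hbv
  -- γf v (-(mfun y)) ≤ 0 < 1, hence -(mfun y) < s0f v
  have hlt : -(mfun y) < s0f v := by
    by_contra hcon
    push_neg at hcon
    have := hs0f v _ hcon
    linarith
  have hsup : s0f v ≤ M := by
    rw [hM]
    exact le_trans (Finset.le_sup' s0f (Finset.mem_univ v)) (le_max_right _ _)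
  -- seminorm bound
  have hub : (⨆ i, x i) ≤ μ := ciSup_le (fun i => by
    rw [hμ]; exact Finset.le_sup' x (Finset.mem_univ i))
  have hlb : mfun x ≤ ⨅ i, x i := le_ciInf (fun i => hm_le x i)
  have hfinal : hilbertSeminorm n x ≤ μ - mfun x := by
    unfold hilbertSeminorm
    linarith
  have : μ - mfun x = -(mfun y) := by rw [hmy]; ring
  linarith

end Aux

theorem stmt16 (n : ℕ) (hn : 1 ≤ n)
    (T : (Fin n → ℝ) → (Fin n → ℝ))
    (hmono : Monotone T) (hhom : AddHomog n T)
    (hconv : ∀ i, ConvexOn ℝ Set.univ (fun x => T x i)) :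
    (∀ α β : ℝ, α ≤ β →
        ∃ M : ℝ, ∀ x ∈ addSliceSpace n T α β, hilbertSeminorm n x ≤ M) ↔
    (∃ C : Set (Fin n), FinalClass n T C ∧
        (∀ C' : Set (Fin n), FinalClass n T C' → C' = C) ∧
        HReach n T C = Set.univ) := by
  classical
  have hn0 : 0 < n := hn
  constructor
  · intro hbdd
    by_contra hrhs
    -- there is always a final class
    obtain ⟨C₀, hC₀, -⟩ := exists_finalClass_subset (T := T)
      ⟨⟨0, hn0⟩, Set.mem_univ _⟩ (fun i _ j _ => Set.mem_univ j)
    have hCsub : C₀ ⊆ HReach n T C₀ :=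
      fun i hi => Set.mem_sInter.mpr (fun R hR => hR.1 hi)
    by_cases hU : ∀ C' : Set (Fin n), FinalClass n T C' → C' = C₀
    · -- unique final class; hence hreach must fail
      by_cases hRe : HReach n T C₀ = Set.univ
      · exact hrhs ⟨C₀, hC₀, hU, hRe⟩
      · set K : Set (Fin n) := (HReach n T C₀)ᶜ with hK
        have hKne : K.Nonempty := Set.nonempty_compl.mpr hRe
        have hdisj : ∀ i ∈ C₀, i ∉ K := fun i hi hiK => hiK (hCsub hi)
        have hHcl : HClosed n T (HReach n T C₀) := by
          intro J i hJne hJsub hiJ hun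
          apply Set.mem_sInter.mpr
          intro R hR
          exact hR.2 J i hJne (fun j hj => Set.mem_sInter.mp (hJsub hj) R hR) hiJ hun
        have hb : ∀ i ∈ K, ∃ b : ℝ, ∀ t : ℝ, 0 ≤ t →
            b ≤ T (Kᶜ.indicator fun _ => -t) i := by
          intro i hiK
          have hiK' : i ∉ HReach n T C₀ := hiK
          obtain ⟨c0, hc0⟩ := hC₀.1
          have hnotun : ¬(∀ c : ℝ, ∃ t : ℝ, 0 ≤ t ∧
              T ((HReach n T C₀).indicator fun _ => -t) i < c) := by
            intro hun
            exact hiK' (hHcl (HReach n T C₀) i ⟨c0, hCsub hc0⟩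
              (fun _ h => h) hiK' hun)
          push_neg at hnotun
          obtain ⟨b, hbspec⟩ := hnotun
          refine ⟨b, fun t ht => ?_⟩
          have hKc : Kᶜ = HReach n T C₀ := by rw [hK, compl_compl]
          rw [hKc]
          exact hbspec t ht
        obtain ⟨α, β, hαβ, hfam⟩ := unbounded_of_KD hmono hhom hKne hC₀.1
          hdisj hC₀.2.1 hb
        obtain ⟨M, hM⟩ := hbdd α β hαβ
        obtain ⟨x, hxs, hxsem⟩ := hfam (max (M+1) 0) (le_max_right _ _)
        have h1 := hM x hxs
        have h2 := le_max_left (M+1) 0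
        linarith
    · -- two distinct final classes
      push_neg at hU
      obtain ⟨C₁, hC₁, hne⟩ := hU
      have hdisj : ∀ i ∈ C₀, i ∉ C₁ := by
        intro i hi0 hi1
        exact hne (finalClass_eq_of_mem hC₁ hC₀ hi1 hi0)
      have hb : ∀ i ∈ C₁, ∃ b : ℝ, ∀ t : ℝ, 0 ≤ t →
          b ≤ T (C₁ᶜ.indicator fun _ => -t) i := by
        intro i hi1
        refine ⟨T (fun _ => 0) i, fun t ht => le_of_eq ?_⟩
        apply supp_indep (g := fun x => T x i)
        intro j hj
        have hjC : j ∈ C₁ := hC₁.2.1 i hi1 j hj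
        have : j ∉ C₁ᶜ := fun h => h hjC
        rw [Set.indicator_of_notMem this]
      obtain ⟨α, β, hαβ, hfam⟩ := unbounded_of_KD hmono hhom hC₁.1 hC₀.1
        hdisj hC₀.2.1 hb
      obtain ⟨M, hM⟩ := hbdd α β hαβ
      obtain ⟨x, hxs, hxsem⟩ := hfam (max (M+1) 0) (le_max_right _ _)
      have h1 := hM x hxs
      have h2 := le_max_left (M+1) 0
      linarith
  · rintro ⟨C, hC, huniq, hreach⟩ α β hαβ
    exact bounded_of_unique hn hmono hhom hconv hC huniq hreach α β hαβ
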